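/- Let F be a strong (ω₁,λ)-semimorass and M ≺ H(θ) countable with F ∈ M, M ∩ λ ∈ F, and such that every X ∈ F with X ⊊ M ∩ λ belongs to M. Then rank(M ∩ λ) = M ∩ ω₁ (where rank is computed in the well-founded order ⊊ on F). -/

import Mathlib

open FirstOrder

/-- The first-order language of set theory: a single binary relation symbol. -/
def setLang : FirstOrder.Language :=
  ⟨fun _ => Empty, fun n => match n with | 2 => Unit | _ => Empty⟩

/-- The universe of ZF sets as a `setLang`-structure, interpreting the binary relation
symbol by genuine membership `∈`. -/
instance : setLang.Structure ZFSet where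
  funMap {n} f _ := Empty.elim f
  RelMap {n} :=
    match n with
    | 0 => fun r _ => Empty.elim r
    | 1 => fun r _ => Empty.elim r
    | 2 => fun _ x => x 0 ∈ x 1
    | _ + 3 => fun r _ => Empty.elim r

/-- `x` is a (von Neumann) ordinal: a transitive set of transitive sets. -/
def ZFIsOrd (x : ZFSet) : Prop := x.IsTransitive ∧ ∀ y ∈ x, ZFSet.IsTransitive y

/-- The (unique, since `∈` well-orders sets of ordinals) `∈`-order isomorphism between
the ZF sets `X` and `Y`, witnessing `tp(X) = tp(Y)`. -/
abbrev zfOrdIso (X Y : ZFSet) :=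
  (fun a b : X.toSet => a.1 ∈ b.1) ≃r (fun a b : Y.toSet => a.1 ∈ b.1)

/-- The pointwise image `ρ[W]` of `W ⊆ X` under an isomorphism `e = ρ_{X,Y}`. -/
def zfImage {X Y : ZFSet} (e : zfOrdIso X Y) (W : ZFSet) : Set ZFSet :=
  {o | ∃ w : X.toSet, w.1 ∈ W ∧ (e w).1 = o}

/-- `F↾X = {Y ∈ F : Y ⊊ X}`. -/
def zfFrestrict (F X : ZFSet) : Set ZFSet := {Y | Y ∈ F ∧ Y.toSet ⊂ X.toSet}

/-- `X = X₁ ⊕ X₂`: same order type, union, and `ρ_{X₁,X₂}` is the identity on `X₁ ∩ X₂`. -/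
def zfOplus (X X₁ X₂ : ZFSet) : Prop :=
  X.toSet = X₁.toSet ∪ X₂.toSet ∧
    ∃ e : zfOrdIso X₁ X₂, ∀ w : X₁.toSet, w.1 ∈ X₂ → (e w).1 = w.1

/-- `tp(A) = tp(B)` for sets of ZF-ordinals, via an `∈`-isomorphism. -/
def zfSameType (A B : Set ZFSet) : Prop :=
  Nonempty ((fun a b : A => a.1 ∈ b.1) ≃r (fun a b : B => a.1 ∈ b.1))

/-- `A = A₁ ⊙ A₂`: same order type, union, and `A₁ ∩ A₂ < A₁ \ A₂ < A₂ \ A₁`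
elementwise (`<` being `∈` on ordinals). -/
def zfOdot (A A₁ A₂ : Set ZFSet) : Prop :=
  A = A₁ ∪ A₂ ∧ zfSameType A₁ A₂ ∧
  (∀ a ∈ A₁ ∩ A₂, ∀ b ∈ A₁ \ A₂, a ∈ b) ∧
  (∀ a ∈ A₁ ∩ A₂, ∀ c ∈ A₂ \ A₁, a ∈ c) ∧
  (∀ b ∈ A₁ \ A₂, ∀ c ∈ A₂ \ A₁, b ∈ c)

/-- `X = X₁ ⊗ X₂`: `X = X₁ ⊕ X₂` and `X ∩ ω₂ = (X₁ ∩ ω₂) ⊙ (X₂ ∩ ω₂)`. -/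
def zfOtimes (om2 X X₁ X₂ : ZFSet) : Prop :=
  zfOplus X X₁ X₂ ∧
    zfOdot (X.toSet ∩ om2.toSet) (X₁.toSet ∩ om2.toSet) (X₂.toSet ∩ om2.toSet)

/-- `F` is a strong `(ω₁,λ)`-semimorass (ZF-coded), with ZF-ordinal-valued rank
function `rk` for the well-founded relation `⊊` on `F`:
(M1) well-foundedness (`rk` satisfying `rk X = sup{rk Y + 1 : Y ∈ F↾X}`);
(M2) local smallness; (M3) homogeneity; (M4) directedness;
(M5) strong local semidirectedness; (M6) `⋃ F = λ`; and `F ⊆ [λ]^ω`. -/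
def zfIsStrongSemimorass (lam om2 F : ZFSet) (rk : ZFSet → ZFSet) : Prop :=
  (∀ X ∈ F, X.toSet ⊆ lam.toSet ∧ X.toSet.Countable ∧ X.toSet.Infinite) ∧
  WellFounded (fun A B : {x : ZFSet // x ∈ F} => A.1.toSet ⊂ B.1.toSet) ∧
  (∀ X ∈ F, ∀ b : ZFSet,
      b ∈ rk X ↔ ∃ Y ∈ F, Y.toSet ⊂ X.toSet ∧ (b ∈ rk Y ∨ b = rk Y)) ∧
  (∀ X ∈ F, (zfFrestrict F X).Countable) ∧
  (∀ X ∈ F, ∀ Y ∈ F, rk X = rk Y → ∃ e : zfOrdIso X Y,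
      zfFrestrict F Y = {Z | ∃ W ∈ zfFrestrict F X, Z.toSet = zfImage e W}) ∧
  (∀ X ∈ F, ∀ Y ∈ F, ∃ Z ∈ F, X.toSet ∪ Y.toSet ⊆ Z.toSet) ∧
  (∀ X ∈ F,
    (∀ A ∈ zfFrestrict F X, ∀ B ∈ zfFrestrict F X,
        ∃ C ∈ zfFrestrict F X, A.toSet ∪ B.toSet ⊆ C.toSet) ∨
    ∃ X₁ ∈ F, ∃ X₂ ∈ F, rk X₁ = rk X₂ ∧ zfOtimes om2 X X₁ X₂ ∧
      zfFrestrict F X = zfFrestrict F X₁ ∪ zfFrestrict F X₂ ∪ {X₁, X₂}) ∧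
  (∀ x : ZFSet, x ∈ lam ↔ ∃ X ∈ F, x ∈ X)

open FirstOrder.Language

theorem ZFSet.mem_toSet (a u : ZFSet) : a ∈ u.toSet ↔ a ∈ u := Iff.rfl

theorem ZFSet.toSet_injective : Function.Injective ZFSet.toSet := SetLike.coe_injective

namespace SL

variable {S : Type*} [setLang.Structure S]

def fmem (a b : ℕ) : setLang.Formula ℕ :=
  Relations.formula₂ (Unit.unit : setLang.Relations 2) (Term.var a) (Term.var b)

def feq (a b : ℕ) : setLang.Formula ℕ := Term.equal (Term.var a) (Term.var b)

noncomputable def fall (s : ℕ) (φ : setLang.Formula ℕ) : setLang.Formula ℕ :=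
  (φ.relabel (fun t => if t = s then Sum.inr () else Sum.inl t : ℕ → ℕ ⊕ Unit)).iAlls Unit

noncomputable def fex (s : ℕ) (φ : setLang.Formula ℕ) : setLang.Formula ℕ :=
  (φ.relabel (fun t => if t = s then Sum.inr () else Sum.inl t : ℕ → ℕ ⊕ Unit)).iExs Unit

@[simp] theorem realize_fmem {a b : ℕ} {v : ℕ → ZFSet} :
    (fmem a b).Realize v ↔ v a ∈ v b := by
  simp [fmem]; rfl

@[simp] theorem realize_feq {a b : ℕ} {v : ℕ → S} :
    (feq a b).Realize v ↔ v a = v b := by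
  simp [feq]

theorem elim_update (v : ℕ → S) (s : ℕ) (i : Unit → S) :
    (fun a => Sum.elim v i (if a = s then Sum.inr () else Sum.inl a)) =
      Function.update v s (i ()) := by
  funext a
  by_cases ha : a = s <;> simp [ha, Function.update_apply]

@[simp] theorem realize_fall {s : ℕ} {φ : setLang.Formula ℕ} {v : ℕ → S} :
    (fall s φ).Realize v ↔ ∀ z : S, φ.Realize (Function.update v s z) := by
  rw [fall, Formula.realize_iAlls]
  simp only [Formula.realize_relabel, Function.comp_def]
  constructor
  · intro h z
    have := h (fun _ => z)
    rwa [elim_update] at this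
  · intro h i
    rw [elim_update]
    exact h _

@[simp] theorem realize_fex {s : ℕ} {φ : setLang.Formula ℕ} {v : ℕ → S} :
    (fex s φ).Realize v ↔ ∃ z : S, φ.Realize (Function.update v s z) := by
  rw [fex, Formula.realize_iExs]
  simp only [Formula.realize_relabel, Function.comp_def]
  constructor
  · rintro ⟨i, h⟩
    rw [elim_update] at h
    exact ⟨i (), h⟩
  · rintro ⟨z, h⟩
    refine ⟨fun _ => z, ?_⟩
    rw [elim_update]
    exact h

theorem master_ex (M : setLang.ElementarySubstructure ZFSet)
    (s : ℕ) (φ : setLang.Formula ℕ) (v : ℕ → ZFSet) (hv : ∀ i, v i ∈ M)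
    (h : ∃ x, φ.Realize (Function.update v s x)) :
    ∃ x, x ∈ M ∧ φ.Realize (Function.update v s x) := by
  let vM : ℕ → M := fun i => (⟨v i, hv i⟩ : M)
  have hco : ((↑) : M → ZFSet) ∘ vM = v := rfl
  have h1 : (fex s φ).Realize v := realize_fex.2 h
  have h2 : (fex s φ).Realize vM := by
    have := M.subtype.map_formula (fex s φ) vM
    rw [ElementarySubstructure.coe_subtype, hco] at this
    exact this.1 h1
  obtain ⟨x₀, hx₀⟩ := (realize_fex (S := M)).1 h2
  have hup : ((↑) : M → ZFSet) ∘ (Function.update vM s x₀) =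
      Function.update v s (x₀ : ZFSet) := by
    funext a
    by_cases ha : a = s <;> simp [ha, Function.update_apply, vM]
  have h3 := M.subtype.map_formula φ (Function.update vM s x₀)
  rw [ElementarySubstructure.coe_subtype, hup] at h3
  exact ⟨x₀, x₀.2, h3.2 hx₀⟩



theorem zf_mem_pair' {a b z : ZFSet} :
    z ∈ ZFSet.pair a b ↔ z = {a} ∨ z = ({a, b} : ZFSet) := by
  simp [ZFSet.pair, ZFSet.mem_pair]

/-- x = {a} characterization -/
theorem zf_eq_singleton {a z : ZFSet} : (∀ w : ZFSet, w ∈ z ↔ w = a) ↔ z = ({a} : ZFSet) := by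
  rw [ZFSet.ext_iff]
  simp

theorem zf_eq_doubleton {a b z : ZFSet} :
    (∀ w : ZFSet, w ∈ z ↔ w = a ∨ w = b) ↔ z = ({a, b} : ZFSet) := by
  rw [ZFSet.ext_iff]
  simp [ZFSet.mem_pair]

noncomputable def isPairF (p a b : ℕ) : setLang.Formula ℕ :=
  fall 20 (fmem 20 p ⇔ ((fall 21 (fmem 21 20 ⇔ feq 21 a)) ⊔
    (fall 21 (fmem 21 20 ⇔ (feq 21 a ⊔ feq 21 b)))))

theorem realize_isPairF {p a b : ℕ} (hp : p < 20) (ha : a < 20) (hb : b < 20)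
    {v : ℕ → ZFSet} : (isPairF p a b).Realize v ↔ v p = ZFSet.pair (v a) (v b) := by
  have h1 : p ≠ 20 := by omega
  have h2 : a ≠ 20 := by omega
  have h3 : a ≠ 21 := by omega
  have h4 : b ≠ 20 := by omega
  have h5 : b ≠ 21 := by omega
  simp only [isPairF, realize_fall, Formula.realize_iff, realize_fmem, Formula.realize_sup,
    realize_feq, Formula.realize_inf, Function.update_apply, if_neg h1, if_neg h2, if_neg h3,
    if_neg h4, if_neg h5, if_pos rfl]
  norm_num
  constructor
  · intro h
    apply ZFSet.ext
    intro z
    rw [h z, zf_mem_pair']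
    constructor
    · rintro (h' | h')
      · exact Or.inl (zf_eq_singleton.1 h')
      · exact Or.inr (zf_eq_doubleton.1 h')
    · rintro (h' | h')
      · exact Or.inl (zf_eq_singleton.2 h')
      · exact Or.inr (zf_eq_doubleton.2 h')
  · intro h z
    rw [h, zf_mem_pair']
    constructor
    · rintro (h' | h')
      · exact Or.inl (zf_eq_singleton.2 h')
      · exact Or.inr (zf_eq_doubleton.2 h')
    · rintro (h' | h')
      · exact Or.inl (zf_eq_singleton.1 h')
      · exact Or.inr (zf_eq_doubleton.1 h')




noncomputable def pairMemF (f a b : ℕ) : setLang.Formula ℕ :=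
  fex 19 (fmem 19 f ⊓ isPairF 19 a b)

theorem realize_pairMemF {f a b : ℕ} (hf : f < 19) (ha : a < 19) (hb : b < 19)
    {v : ℕ → ZFSet} : (pairMemF f a b).Realize v ↔ ZFSet.pair (v a) (v b) ∈ v f := by
  have h1 : f ≠ 19 := by omega
  have h2 : a ≠ 19 := by omega
  have h3 : b ≠ 19 := by omega
  simp only [pairMemF, realize_fex, Formula.realize_inf, realize_fmem,
    realize_isPairF (show (19:ℕ) < 20 by omega) (show a < 20 by omega) (show b < 20 by omega),
    Function.update_apply, if_neg h1, if_neg h2, if_neg h3, if_pos rfl, if_true]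
  constructor
  · rintro ⟨z, hz, h⟩
    rwa [← h]
  · intro h
    exact ⟨_, h, rfl⟩

noncomputable def ssubF (A B : ℕ) : setLang.Formula ℕ :=
  (fall 18 (fmem 18 A ⟹ fmem 18 B)) ⊓ ∼(fall 18 (fmem 18 B ⟹ fmem 18 A))

theorem realize_ssubF {A B : ℕ} (hA : A < 18) (hB : B < 18) {v : ℕ → ZFSet} :
    (ssubF A B).Realize v ↔ (v A).toSet ⊂ (v B).toSet := by
  have h1 : A ≠ 18 := by omega
  have h2 : B ≠ 18 := by omega
  simp only [ssubF, Formula.realize_inf, Formula.realize_not, realize_fall,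
    Formula.realize_imp, realize_fmem, Function.update_apply, if_neg h1, if_neg h2,
    if_pos rfl, if_true]
  rw [ssubset_iff_subset_not_subset]
  simp only [Set.subset_def, ZFSet.mem_toSet]

def ZInd (w : ZFSet) : Prop := ∅ ∈ w ∧ ∀ x ∈ w, insert x x ∈ w

noncomputable def indF (w : ℕ) : setLang.Formula ℕ :=
  (fall 17 ((fall 16 (∼(fmem 16 17))) ⟹ fmem 17 w)) ⊓
    (fall 17 (fmem 17 w ⟹ fall 16 ((fall 15 (fmem 15 16 ⇔ (fmem 15 17 ⊔ feq 15 17))) ⟹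
      fmem 16 w)))

theorem realize_indF {w : ℕ} (hw : w < 15) {v : ℕ → ZFSet} :
    (indF w).Realize v ↔ ZInd (v w) := by
  have h1 : w ≠ 15 := by omega
  have h2 : w ≠ 16 := by omega
  have h3 : w ≠ 17 := by omega
  simp only [indF, Formula.realize_inf, realize_fall, Formula.realize_imp, Formula.realize_iff,
    Formula.realize_sup, Formula.realize_not, realize_fmem, realize_feq,
    Function.update_apply, if_neg h1, if_neg h2, if_neg h3, if_pos rfl, if_true]
  norm_num
  constructor
  · rintro ⟨he, hs⟩
    constructor
    · exact he ∅ (fun z => ZFSet.notMem_empty z)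
    · intro x hx
      refine hs x hx (insert x x) (fun t => ?_)
      simp [ZFSet.mem_insert_iff, or_comm]
  · rintro ⟨he, hs⟩
    constructor
    · intro e hee
      have : e = ∅ := (ZFSet.eq_empty e).2 hee
      rwa [this]
    · intro x hx s hss
      have : s = insert x x := by
        apply ZFSet.ext
        intro t
        rw [hss t, ZFSet.mem_insert_iff, or_comm]
      rw [this]
      exact hs x hx

noncomputable def inOmegaF (n : ℕ) : setLang.Formula ℕ :=
  fall 14 (indF 14 ⟹ fmem n 14)

theorem realize_inOmegaF {n : ℕ} (hn : n < 14) {v : ℕ → ZFSet} :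
    (inOmegaF n).Realize v ↔ ∀ w : ZFSet, ZInd w → v n ∈ w := by
  have h1 : n ≠ 14 := by omega
  simp only [inOmegaF, realize_fall, Formula.realize_imp, realize_fmem,
    realize_indF (show (14:ℕ) < 15 by omega), Function.update_apply,
    if_neg h1, if_pos rfl, if_true]



/-- `f` codes a surjection from (a subset of) the intersection of all inductive sets onto `X`. -/
def IsSurjCode (f X : ZFSet) : Prop :=
  (∀ p ∈ f, ∃ n y, p = ZFSet.pair n y ∧ y ∈ X ∧ ∀ w, ZInd w → n ∈ w) ∧
  (∀ n y y', ZFSet.pair n y ∈ f → ZFSet.pair n y' ∈ f → y = y') ∧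
  (∀ y ∈ X, ∃ n, ZFSet.pair n y ∈ f)

/-- Formula: var 0 = the surjection code, var 1 = the target set. -/
noncomputable def surF : setLang.Formula ℕ :=
  ((fall 2 (fmem 2 0 ⟹ fex 3 (fex 4 ((isPairF 2 3 4 ⊓ fmem 4 1) ⊓ inOmegaF 3)))) ⊓
    (fall 3 (fall 4 (fall 5 (pairMemF 0 3 4 ⟹ (pairMemF 0 3 5 ⟹ feq 4 5)))))) ⊓
    (fall 4 (fmem 4 1 ⟹ fex 3 (pairMemF 0 3 4)))

theorem realize_surF {v : ℕ → ZFSet} : surF.Realize v ↔ IsSurjCode (v 0) (v 1) := by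
  simp only [surF, Formula.realize_inf, realize_fall, realize_fex, Formula.realize_imp,
    realize_fmem, realize_feq,
    realize_isPairF (by omega : (2:ℕ) < 20) (by omega : (3:ℕ) < 20) (by omega : (4:ℕ) < 20),
    realize_inOmegaF (by omega : (3:ℕ) < 14),
    realize_pairMemF (by omega : (0:ℕ) < 19) (by omega : (3:ℕ) < 19) (by omega : (4:ℕ) < 19),
    realize_pairMemF (by omega : (0:ℕ) < 19) (by omega : (3:ℕ) < 19) (by omega : (5:ℕ) < 19),
    Function.update_apply]
  norm_num [IsSurjCode]
  constructor
  · rintro ⟨⟨h1, h2⟩, h3⟩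
    refine ⟨fun p hp => ?_, h2, h3⟩
    obtain ⟨n, ⟨y, hpair, hyX⟩, hom⟩ := h1 p hp
    exact ⟨n, y, hpair, hyX, hom⟩
  · rintro ⟨h1, h2, h3⟩
    refine ⟨⟨fun p hp => ?_, h2⟩, h3⟩
    obtain ⟨n, y, hpair, hyX, hom⟩ := h1 p hp
    exact ⟨n, ⟨y, hpair, hyX⟩, hom⟩



/-- `f` is an "attempt" at computing the rank function of `(F, ⊊)`. -/
def IsAttempt (F f : ZFSet) : Prop :=
  (∀ p ∈ f, ∃ Z c, p = ZFSet.pair Z c ∧ Z ∈ F ∧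
    (∀ t : ZFSet, t ∈ c ↔ ∃ W, (W ∈ F ∧ W.toSet ⊂ Z.toSet) ∧
      ∃ d, ZFSet.pair W d ∈ f ∧ (t ∈ d ∨ t = d))) ∧
  (∀ Z c, ZFSet.pair Z c ∈ f → ∀ W, (W ∈ F ∧ W.toSet ⊂ Z.toSet) → ∃ d, ZFSet.pair W d ∈ f)

/-- Formula: "b is the rank of X in (F,⊊)", with variable indices `b X Fv < 3`. -/
noncomputable def rkDefF (b X Fv : ℕ) : setLang.Formula ℕ :=
  fex 3 ((
    (fall 4 (fmem 4 3 ⟹ fex 5 (fex 6 ((isPairF 4 5 6 ⊓ fmem 5 Fv) ⊓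
      (fall 7 (fmem 7 6 ⇔ fex 8 ((fmem 8 Fv ⊓ ssubF 8 5) ⊓
        fex 9 (pairMemF 3 8 9 ⊓ (fmem 7 9 ⊔ feq 7 9))))))))) ⊓
    (fall 5 (fall 6 (pairMemF 3 5 6 ⟹ fall 8 ((fmem 8 Fv ⊓ ssubF 8 5) ⟹
      fex 9 (pairMemF 3 8 9)))))) ⊓
    pairMemF 3 X b)

theorem realize_rkDefF {b X Fv : ℕ} (hb : b < 3) (hX : X < 3) (hF : Fv < 3)
    {v : ℕ → ZFSet} :
    (rkDefF b X Fv).Realize v ↔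
      ∃ f, IsAttempt (v Fv) f ∧ ZFSet.pair (v X) (v b) ∈ f := by
  have e1 : b ≠ 3 := by omega
  have e2 : X ≠ 3 := by omega
  have e3 : Fv ≠ 3 := by omega
  have e4 : Fv ≠ 4 := by omega
  have e5 : Fv ≠ 5 := by omega
  have e6 : Fv ≠ 6 := by omega
  have e7 : Fv ≠ 7 := by omega
  have e8 : Fv ≠ 8 := by omega
  have e9 : Fv ≠ 9 := by omega
  simp only [rkDefF, realize_fex, realize_fall, Formula.realize_inf, Formula.realize_imp,
    Formula.realize_iff, Formula.realize_sup, realize_fmem, realize_feq,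
    realize_isPairF (by omega : (4:ℕ) < 20) (by omega : (5:ℕ) < 20) (by omega : (6:ℕ) < 20),
    realize_ssubF (by omega : (8:ℕ) < 18) (by omega : (5:ℕ) < 18),
    realize_pairMemF (by omega : (3:ℕ) < 19) (by omega : (8:ℕ) < 19) (by omega : (9:ℕ) < 19),
    realize_pairMemF (by omega : (3:ℕ) < 19) (by omega : (5:ℕ) < 19) (by omega : (6:ℕ) < 19),
    realize_pairMemF (by omega : (3:ℕ) < 19) (show X < 19 by omega) (show b < 19 by omega),
    Function.update_apply, if_neg e1, if_neg e2, if_neg e3, if_neg e4, if_neg e5,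
    if_neg e6, if_neg e7, if_neg e8, if_neg e9]
  norm_num [IsAttempt]
  simp only [and_assoc]



/-! ### von Neumann numerals -/

def zNat (n : ℕ) : ZFSet := ZFSet.mk (PSet.ofNat n)

theorem zNat_zero : zNat 0 = ∅ := rfl

theorem zNat_succ (n : ℕ) : zNat (n + 1) = insert (zNat n) (zNat n) := rfl

theorem mem_omega_iff {x : ZFSet} : x ∈ ZFSet.omega ↔ ∃ n, x = zNat n := by
  constructor
  · refine Quotient.inductionOn x (fun y hy => ?_)
    obtain ⟨⟨n⟩, h⟩ := ZFSet.mk_mem_iff.1 hy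
    exact ⟨n, Quotient.sound h⟩
  · rintro ⟨n, rfl⟩
    induction n with
    | zero => exact ZFSet.omega_zero
    | succ k ih => rw [zNat_succ]; exact ZFSet.omega_succ ih

theorem zInd_omega : ZInd ZFSet.omega :=
  ⟨ZFSet.omega_zero, fun x hx => ZFSet.omega_succ hx⟩

theorem zNat_mem_of_lt {n m : ℕ} (h : n < m) : zNat n ∈ zNat m := by
  induction m with
  | zero => omega
  | succ k ih =>
    rw [zNat_succ, ZFSet.mem_insert_iff]
    rcases Nat.lt_succ_iff_lt_or_eq.1 h with h' | h'
    · exact Or.inr (ih h')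
    · exact Or.inl (by rw [h'])

theorem zNat_injective : Function.Injective zNat := by
  intro n m h
  by_contra hne
  rcases Nat.lt_or_ge n m with h' | h'
  · have := zNat_mem_of_lt h'
    rw [h] at this
    exact ZFSet.mem_irrefl _ this
  · have h2 : m < n := by omega
    have := zNat_mem_of_lt h2
    rw [h] at this
    exact ZFSet.mem_irrefl _ this

theorem zNat_mem_ind {w : ZFSet} (hw : ZInd w) (n : ℕ) : zNat n ∈ w := by
  induction n with
  | zero => exact zNat_zero ▸ hw.1
  | succ k ih => rw [zNat_succ]; exact hw.2 _ ih



/-! ### Closure properties of a countable elementary submodel -/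

section Melem

variable (M : setLang.ElementarySubstructure ZFSet) {A : ZFSet} (hA : A ∈ M)

include hA

theorem empty_mem_M : (∅ : ZFSet) ∈ M := by
  obtain ⟨x, hxM, hx⟩ := master_ex M 0 (fall 1 (∼(fmem 1 0))) (fun _ => A) (fun _ => hA)
    ⟨∅, by simp⟩
  simp only [realize_fall, Formula.realize_not, realize_fmem, Function.update_apply] at hx
  have : x = ∅ := (ZFSet.eq_empty x).2 (fun y hy => by
    have := hx y
    simp at this
    exact this hy)
  rwa [this] at hxM

theorem succ_mem_M {x : ZFSet} (hx : x ∈ M) : insert x x ∈ M := by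
  obtain ⟨s, hsM, hs⟩ := master_ex M 0 (fall 2 (fmem 2 0 ⇔ (fmem 2 1 ⊔ feq 2 1)))
    (fun _ => x) (fun _ => hx)
    ⟨insert x x, by
      simp only [realize_fall, Formula.realize_iff, Formula.realize_sup, realize_fmem,
        realize_feq, Function.update_apply]
      intro z
      norm_num [ZFSet.mem_insert_iff, or_comm]⟩
  simp only [realize_fall, Formula.realize_iff, Formula.realize_sup, realize_fmem,
    realize_feq, Function.update_apply] at hs
  have : s = insert x x := by
    apply ZFSet.ext
    intro z
    have := hs z
    norm_num at this
    rw [this, ZFSet.mem_insert_iff, or_comm]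
  rwa [this] at hsM

theorem zNat_mem_M (n : ℕ) : zNat n ∈ M := by
  induction n with
  | zero => rw [zNat_zero]; exact empty_mem_M M hA
  | succ k ih => rw [zNat_succ]; exact succ_mem_M M hA ih

theorem mem_omega_mem_M {x : ZFSet} (hx : x ∈ ZFSet.omega) : x ∈ M := by
  obtain ⟨n, rfl⟩ := mem_omega_iff.1 hx
  exact zNat_mem_M M hA n

/-- Countable members of `M` are subsets of `M`. -/
theorem subset_M {X : ZFSet} (hXM : X ∈ M) (hcnt : X.toSet.Countable) :
    ∀ x ∈ X, x ∈ M := by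
  intro x hx
  obtain ⟨g, hg⟩ := hcnt.exists_eq_range ⟨x, hx⟩
  -- build the ZF surjection code in V
  have hgX : ∀ n, g n ∈ X := by
    intro n
    have : g n ∈ X.toSet := hg ▸ Set.mem_range_self n
    exact this
  set fc : ZFSet := ZFSet.range (fun n : ℕ => ZFSet.pair (zNat n) (g n)) with hfc
  have hmemfc : ∀ p : ZFSet, p ∈ fc ↔ ∃ n : ℕ, p = ZFSet.pair (zNat n) (g n) := by
    intro p
    rw [hfc, ZFSet.mem_range]
    constructor
    · rintro ⟨n, rfl⟩; exact ⟨n, rfl⟩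
    · rintro ⟨n, rfl⟩; exact ⟨n, rfl⟩
  have hcode : IsSurjCode fc X := by
    refine ⟨?_, ?_, ?_⟩
    · intro p hp
      obtain ⟨n, rfl⟩ := (hmemfc p).1 hp
      exact ⟨zNat n, g n, rfl, hgX n, fun w hw => zNat_mem_ind hw n⟩
    · intro n y y' hy hy'
      obtain ⟨k, hk⟩ := (hmemfc _).1 hy
      obtain ⟨k', hk'⟩ := (hmemfc _).1 hy'
      obtain ⟨h1, h2⟩ := ZFSet.pair_injective hk
      obtain ⟨h1', h2'⟩ := ZFSet.pair_injective hk'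
      have hkk : k = k' := zNat_injective (h1.symm.trans h1')
      rw [h2, h2', hkk]
    · intro y hy
      have hy' : y ∈ X.toSet := hy
      rw [hg] at hy'
      obtain ⟨n, rfl⟩ := hy'
      exact ⟨zNat n, (hmemfc _).2 ⟨n, rfl⟩⟩
  -- transfer: get a surjection code inside M
  obtain ⟨f₀, hf₀M, hf₀⟩ := master_ex M 0 surF (fun _ => X) (fun _ => hXM)
    ⟨fc, by
      rw [realize_surF]
      simpa using hcode⟩
  rw [realize_surF] at hf₀
  simp only [Function.update_self, Function.update_apply, if_pos rfl] at hf₀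
  norm_num at hf₀
  obtain ⟨hc1, hc2, hc3⟩ := hf₀
  obtain ⟨n₀, hn₀⟩ := hc3 x hx
  obtain ⟨n, y, hpair, hyX, hind⟩ := hc1 _ hn₀
  obtain ⟨h1, h2⟩ := ZFSet.pair_injective hpair
  subst h1
  have hn₀M : n₀ ∈ M := mem_omega_mem_M M hA (hind _ zInd_omega)
  -- x is the unique y with ⟨n₀, y⟩ ∈ f₀
  obtain ⟨y', hy'M, hy'⟩ := master_ex M 2 (pairMemF 0 1 2)
    (fun i => if i = 0 then f₀ else n₀) (fun i => by by_cases h : i = 0 <;> simp [h, hf₀M, hn₀M])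
    ⟨x, by
      rw [realize_pairMemF (by omega) (by omega) (by omega)]
      simpa using hn₀⟩
  rw [realize_pairMemF (by omega) (by omega) (by omega)] at hy'
  simp only [Function.update_apply] at hy'
  norm_num at hy'
  have hxy : y' = x := hc2 n₀ y' x hy' hn₀
  rwa [hxy] at hy'M

end Melem



/-! ### Rank attempts -/

section Attempt

variable {F : ZFSet} {rk : ZFSet → ZFSet}
  (hwf : WellFounded (fun A B : {x : ZFSet // x ∈ F} => A.1.toSet ⊂ B.1.toSet))
  (hM1 : ∀ X ∈ F, ∀ b : ZFSet,
      b ∈ rk X ↔ ∃ Y ∈ F, Y.toSet ⊂ X.toSet ∧ (b ∈ rk Y ∨ b = rk Y))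

include hwf hM1

theorem attempt_sound {f : ZFSet} (hf : IsAttempt F f) :
    ∀ Z c : ZFSet, ZFSet.pair Z c ∈ f → c = rk Z := by
  have key : ∀ Zs : {x : ZFSet // x ∈ F}, ∀ c : ZFSet, ZFSet.pair Zs.1 c ∈ f → c = rk Zs.1 := by
    intro Zs
    induction Zs using hwf.induction with
    | _ Zs IH =>
      intro c hc
      obtain ⟨Z', c', heq, hZ'F, hchar⟩ := hf.1 _ hc
      obtain ⟨h1, h2⟩ := ZFSet.pair_injective heq
      apply ZFSet.ext
      intro t
      rw [h2, hchar t, hM1 Zs.1 Zs.2 t]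
      constructor
      · rintro ⟨W, ⟨hWF, hWZ⟩, d, hd, htd⟩
        rw [← h1] at hWZ
        have hdrk : d = rk W := IH ⟨W, hWF⟩ hWZ d hd
        exact ⟨W, hWF, hWZ, hdrk ▸ htd⟩
      · rintro ⟨Y, hYF, hYZ, hty⟩
        obtain ⟨d, hd⟩ := hf.2 _ _ hc Y ⟨hYF, h1 ▸ hYZ⟩
        have hdrk : d = rk Y := IH ⟨Y, hYF⟩ hYZ d hd
        exact ⟨Y, ⟨hYF, h1 ▸ hYZ⟩, d, hd, hdrk ▸ hty⟩
  intro Z c hc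
  obtain ⟨Z', c', heq, hZ'F, _⟩ := hf.1 _ hc
  obtain ⟨h1, h2⟩ := ZFSet.pair_injective heq
  exact key ⟨Z, h1 ▸ hZ'F⟩ c hc

omit hwf in
theorem attempt_exists (hM2 : ∀ X ∈ F, {Y : ZFSet | Y ∈ F ∧ Y.toSet ⊂ X.toSet}.Countable)
    {Z : ZFSet} (hZF : Z ∈ F) :
    ∃ f : ZFSet, IsAttempt F f ∧ ZFSet.pair Z (rk Z) ∈ f := by
  classical
  -- the domain: {W ∈ F | W ⊆ Z}, a countable set containing Z
  set D : Set ZFSet := {W | W ∈ F ∧ W.toSet ⊆ Z.toSet} with hD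
  have hDcnt : D.Countable := by
    have : D ⊆ {Y : ZFSet | Y ∈ F ∧ Y.toSet ⊂ Z.toSet} ∪ {Z} := by
      rintro W ⟨hWF, hWZ⟩
      rcases eq_or_ne W Z with rfl | hne
      · exact Or.inr rfl
      · refine Or.inl ⟨hWF, hWZ, fun hZW => hne ?_⟩
        have : W.toSet = Z.toSet := Set.Subset.antisymm hWZ hZW
        exact ZFSet.toSet_injective this
    exact Set.Countable.mono this (((hM2 Z hZF)).union (Set.countable_singleton Z))
  have hDne : D.Nonempty := ⟨Z, hZF, Set.Subset.rfl⟩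
  obtain ⟨gD, hgD⟩ := hDcnt.exists_eq_range hDne
  set f : ZFSet := ZFSet.range (fun n : ℕ => ZFSet.pair (gD n) (rk (gD n))) with hf
  have hmemf : ∀ p : ZFSet, p ∈ f ↔ ∃ W ∈ D, p = ZFSet.pair W (rk W) := by
    intro p
    rw [hf, ZFSet.mem_range]
    constructor
    · rintro ⟨n, rfl⟩
      exact ⟨gD n, by rw [hgD]; exact Set.mem_range_self n, rfl⟩
    · rintro ⟨W, hW, rfl⟩
      rw [hgD] at hW
      obtain ⟨n, rfl⟩ := hW
      exact ⟨n, rfl⟩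
  have hpairf : ∀ W d : ZFSet, ZFSet.pair W d ∈ f → W ∈ D ∧ d = rk W := by
    intro W d hWd
    obtain ⟨W', hW', heq⟩ := (hmemf _).1 hWd
    obtain ⟨h1, h2⟩ := ZFSet.pair_injective heq
    exact ⟨h1 ▸ hW', h1 ▸ h2⟩
  refine ⟨f, ⟨?_, ?_⟩, (hmemf _).2 ⟨Z, ⟨hZF, Set.Subset.rfl⟩, rfl⟩⟩
  · intro p hp
    obtain ⟨W, hWD, rfl⟩ := (hmemf p).1 hp
    refine ⟨W, rk W, rfl, hWD.1, fun t => ?_⟩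
    rw [hM1 W hWD.1 t]
    constructor
    · rintro ⟨Y, hYF, hYW, hty⟩
      have hYD : Y ∈ D := ⟨hYF, hYW.1.trans hWD.2⟩
      exact ⟨Y, ⟨hYF, hYW⟩, rk Y, (hmemf _).2 ⟨Y, hYD, rfl⟩, hty⟩
    · rintro ⟨W', ⟨hW'F, hW'W⟩, d, hd, htd⟩
      have : d = rk W' := (hpairf _ _ hd).2
      exact ⟨W', hW'F, hW'W, this ▸ htd⟩
  · rintro Z' c hZ'c W ⟨hWF, hWZ'⟩
    have hZ'D : Z' ∈ D := (hpairf _ _ hZ'c).1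
    have hWD : W ∈ D := ⟨hWF, hWZ'.1.trans hZ'D.2⟩
    exact ⟨rk W, (hmemf _).2 ⟨W, hWD, rfl⟩⟩

end Attempt



section RkM

theorem rk_mem_M (M : setLang.ElementarySubstructure ZFSet) {F : ZFSet} {rk : ZFSet → ZFSet}
    (hFM : F ∈ M)
    (hwf : WellFounded (fun A B : {x : ZFSet // x ∈ F} => A.1.toSet ⊂ B.1.toSet))
    (hM1 : ∀ X ∈ F, ∀ b : ZFSet,
      b ∈ rk X ↔ ∃ Y ∈ F, Y.toSet ⊂ X.toSet ∧ (b ∈ rk Y ∨ b = rk Y))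
    (hM2 : ∀ X ∈ F, {Y : ZFSet | Y ∈ F ∧ Y.toSet ⊂ X.toSet}.Countable)
    {Y : ZFSet} (hYF : Y ∈ F) (hYM : Y ∈ M) : rk Y ∈ M := by
  obtain ⟨b, hbM, hb⟩ := master_ex M 0 (rkDefF 0 1 2)
    (fun i => if i = 1 then Y else F)
    (fun i => by by_cases h : i = 1 <;> simp [h, hYM, hFM])
    ⟨rk Y, by
      rw [realize_rkDefF (by omega) (by omega) (by omega)]
      simp only [Function.update_apply]
      norm_num
      exact attempt_exists hM1 hM2 hYF⟩
  rw [realize_rkDefF (by omega) (by omega) (by omega)] at hb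
  simp only [Function.update_apply] at hb
  norm_num at hb
  obtain ⟨f, hf, hpair⟩ := hb
  have hbrk : b = rk Y := attempt_sound hwf hM1 hf Y b hpair
  rwa [hbrk] at hbM

end RkM

end SL

theorem stmt9 (lam om1 om2 : ZFSet) (hlam : ZFIsOrd lam)
    (hom1 : ZFIsOrd om1 ∧ ¬ om1.toSet.Countable ∧ ∀ y ∈ om1, y.toSet.Countable)
    (hom2 : ZFIsOrd om2 ∧ om1 ∈ om2 ∧
      (∀ y ∈ om2, ∃ f : y.toSet → om1.toSet, Function.Injective f) ∧
      ¬ ∃ f : om2.toSet → om1.toSet, Function.Injective f)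
    (hom1lam : om1.toSet ⊆ lam.toSet)
    (F : ZFSet) (rk : ZFSet → ZFSet)
    (hsm : zfIsStrongSemimorass lam om2 F rk)
    (hrkctble : ∀ X ∈ F, ZFIsOrd (rk X) ∧ rk X ∈ om1)
    (hreal : ∀ α ∈ om1, ∃ X ∈ F, rk X = α)
    (M : setLang.ElementarySubstructure ZFSet)
    (hMcnt : (M : Set ZFSet).Countable)
    (hFM : F ∈ M)
    (Xlam : ZFSet) (hXlam : Xlam.toSet = {x | x ∈ M ∧ x ∈ lam}) (hXlamF : Xlam ∈ F)
    (hMclosed : ∀ X ∈ F, X.toSet ⊂ Xlam.toSet → X ∈ M) :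
    ∀ α : ZFSet, α ∈ rk Xlam ↔ (α ∈ M ∧ α ∈ om1) := by
  obtain ⟨h1, hwf, hM1, hM2, -, -, -, hUnion⟩ := hsm
  have hM2' : ∀ X ∈ F, {Y : ZFSet | Y ∈ F ∧ Y.toSet ⊂ X.toSet}.Countable := hM2
  -- every member of F lying in M is a subset of M
  have FsubM : ∀ Z, Z ∈ F → Z ∈ M → ∀ z ∈ Z, z ∈ M := by
    intro Z hZF hZM
    exact SL.subset_M M hFM hZM (h1 Z hZF).2.1
  -- ranks of members of F↾Xlam are subsets of M
  have C2 : ∀ Zs : {x : ZFSet // x ∈ F}, Zs.1.toSet ⊂ Xlam.toSet →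
      ∀ t, t ∈ rk Zs.1 → t ∈ M := by
    intro Zs
    induction Zs using hwf.induction with
    | _ Zs IH =>
      intro hsub t ht
      obtain ⟨W, hWF, hWZ, hle⟩ := (hM1 Zs.1 Zs.2 t).1 ht
      have hWX : W.toSet ⊂ Xlam.toSet := hWZ.trans hsub
      rcases hle with h | h
      · exact IH ⟨W, hWF⟩ hWZ hWX t h
      · have hWM := hMclosed W hWF hWX
        have := SL.rk_mem_M M hFM hwf hM1 hM2' hWF hWM
        rwa [h]
  intro α
  constructor
  · -- forward direction
    intro hα
    obtain ⟨Y, hYF, hYsub, hle⟩ := (hM1 Xlam hXlamF α).1 hα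
    have hYM := hMclosed Y hYF hYsub
    have hrkYom1 := (hrkctble Y hYF).2
    rcases hle with h | h
    · exact ⟨C2 ⟨Y, hYF⟩ hYsub α h, (hom1.1.1).mem_trans h hrkYom1⟩
    · subst h
      exact ⟨SL.rk_mem_M M hFM hwf hM1 hM2' hYF hYM, hrkYom1⟩
  · -- backward direction
    rintro ⟨hαM, hαom1⟩
    -- Xlam is not a member of M
    have hXlamNotM : Xlam ∉ M := by
      intro hXM
      have hne : ∃ u, u ∈ om1 ∧ u ∉ Xlam := by
        by_contra hcon
        push_neg at hcon
        have hsub : om1.toSet ⊆ Xlam.toSet := fun u hu => hcon u hu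
        exact hom1.2.1 (((h1 Xlam hXlamF).2.1).mono hsub)
      obtain ⟨u, huom1, huX⟩ := hne
      have hulam : u ∈ lam := hom1lam huom1
      obtain ⟨Z0, hZ0F, huZ0⟩ := (hUnion u).1 hulam
      obtain ⟨Z, hZM, hZ⟩ := SL.master_ex M 0
        (SL.fmem 0 1 ⊓ SL.fex 2 (SL.fmem 2 0 ⊓ ∼(SL.fmem 2 3)))
        (fun i => if i = 1 then F else Xlam)
        (fun i => by by_cases h : i = 1 <;> simp [h, hFM, hXM])
        ⟨Z0, by
          simp only [FirstOrder.Language.Formula.realize_inf,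
            FirstOrder.Language.Formula.realize_not, SL.realize_fex, SL.realize_fmem,
            Function.update_apply]
          norm_num
          exact ⟨hZ0F, u, huZ0, huX⟩⟩
      simp only [FirstOrder.Language.Formula.realize_inf,
        FirstOrder.Language.Formula.realize_not, SL.realize_fex, SL.realize_fmem,
        Function.update_apply] at hZ
      norm_num at hZ
      obtain ⟨hZF, z, hzZ, hzX⟩ := hZ
      apply hzX
      rw [← ZFSet.mem_toSet _ _, hXlam]
      exact ⟨FsubM Z hZF hZM z hzZ, (ZFSet.mem_toSet _ _).1 ((h1 Z hZF).1 ((ZFSet.mem_toSet _ _).2 hzZ))⟩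
    -- find X ∈ M ∩ F with rk X = α
    obtain ⟨X0, hX0F, hrkX0⟩ := hreal α hαom1
    obtain ⟨X, hXM, hX⟩ := SL.master_ex M 0 (SL.fmem 0 1 ⊓ SL.rkDefF 2 0 1)
      (fun i => if i = 2 then α else F)
      (fun i => by by_cases h : i = 2 <;> simp [h, hαM, hFM])
      ⟨X0, by
        rw [FirstOrder.Language.Formula.realize_inf,
          SL.realize_rkDefF (by omega) (by omega) (by omega)]
        simp only [SL.realize_fmem, Function.update_apply]
        norm_num
        refine ⟨hX0F, ?_⟩
        have := SL.attempt_exists hM1 hM2' hX0F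
        rwa [hrkX0] at this⟩
    rw [FirstOrder.Language.Formula.realize_inf,
      SL.realize_rkDefF (by omega) (by omega) (by omega)] at hX
    simp only [SL.realize_fmem, Function.update_apply] at hX
    norm_num at hX
    obtain ⟨hXF, f, hf, hpairf⟩ := hX
    have hrkX : α = rk X := SL.attempt_sound hwf hM1 hf X α hpairf
    have hXsub : X.toSet ⊆ Xlam.toSet := by
      intro z hz
      rw [hXlam]
      exact ⟨FsubM X hXF hXM z hz, (ZFSet.mem_toSet _ _).1 ((h1 X hXF).1 hz)⟩
    have hXssub : X.toSet ⊂ Xlam.toSet := by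
      refine ⟨hXsub, fun hsup => ?_⟩
      exact hXlamNotM (ZFSet.toSet_injective (Set.Subset.antisymm hXsub hsup) ▸ hXM)
    exact (hM1 Xlam hXlamF α).2 ⟨X, hXF, hXssub, Or.inr hrkX⟩
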